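/- The set function F(S) = log det( ε I_d + Σ_{j∈S} k_j k_j^T ) on subsets of {1,...,N}, with ε > 0 and k_j ∈ R^d, is submodular: for all A ⊆ B and i ∉ B, F(A ∪ {i}) − F(A) ≥ F(B ∪ {i}) − F(B). -/

import Mathlib

open Matrix

private lemma psd_vmv {d : ℕ} (u : Fin d → ℝ) : (vecMulVec u u).PosSemidef := by
  have h := Matrix.posSemidef_conjTranspose_mul_self (replicateRow (Fin 1) u)
  rw [conjTranspose_replicateRow, star_trivial] at h
  rw [vecMulVec_eq (Fin 1)]
  exact h

private lemma det1 {d : ℕ} {M : Matrix (Fin d) (Fin d) ℝ} (hM : IsUnit M.det)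
    (u v : Fin d → ℝ) :
    (M + vecMulVec u v).det = M.det * (1 + v ⬝ᵥ M⁻¹ *ᵥ u) := by
  rw [vecMulVec_eq (Fin 1), det_add_replicateCol_mul_replicateRow hM]
  congr 1
  simp only [det_unique]
  simp only [Matrix.add_apply, Matrix.one_apply_eq, Matrix.mul_apply, Matrix.replicateRow_apply,
    Matrix.replicateCol_apply, dotProduct, mulVec, Finset.mul_sum, Finset.sum_mul]
  congr 1
  rw [Finset.sum_comm]
  apply Finset.sum_congr rfl; intros; apply Finset.sum_congr rfl; intros; ring

private lemma symm_form {d : ℕ} {M : Matrix (Fin d) (Fin d) ℝ} (hM : M.PosDef)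
    (u v : Fin d → ℝ) : v ⬝ᵥ M⁻¹ *ᵥ u = u ⬝ᵥ M⁻¹ *ᵥ v := by
  have hsym : (M⁻¹)ᵀ = M⁻¹ := by
    have := hM.isHermitian.inv
    simpa [Matrix.IsHermitian, Matrix.conjTranspose_eq_transpose_of_trivial] using this
  have hvm : v ᵥ* M⁻¹ = M⁻¹ *ᵥ v := by
    conv_lhs => rw [← hsym]
    exact vecMul_transpose _ _
  rw [dotProduct_mulVec, hvm, dotProduct_comm]

private lemma det2 {d : ℕ} {M : Matrix (Fin d) (Fin d) ℝ} (hM : M.PosDef)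
    (u v : Fin d → ℝ) :
    (M + vecMulVec u u + vecMulVec v v).det =
      M.det * ((1 + u ⬝ᵥ M⁻¹ *ᵥ u) * (1 + v ⬝ᵥ M⁻¹ *ᵥ v)
        - (u ⬝ᵥ M⁻¹ *ᵥ v) * (u ⬝ᵥ M⁻¹ *ᵥ v)) := by
  classical
  set C : Matrix (Fin d) (Fin 2) ℝ := Matrix.of fun x j => if j = 0 then u x else v x with hC
  have hsum : vecMulVec u u + vecMulVec v v = C * Cᵀ := by
    ext x y
    simp [hC, Matrix.mul_apply, Fin.sum_univ_two, vecMulVec, mul_comm]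
  rw [add_assoc, hsum, det_add_mul _ _ hM.det_pos.ne'.isUnit]
  congr 1
  have entry : ∀ j l : Fin 2, ((1 + Cᵀ * M⁻¹ * C : Matrix (Fin 2) (Fin 2) ℝ)) j l
      = (if j = l then 1 else 0) +
        (fun x => C x j) ⬝ᵥ M⁻¹ *ᵥ (fun x => C x l) := by
    intro j l
    simp only [Matrix.add_apply, Matrix.one_apply, Matrix.mul_apply, Matrix.transpose_apply,
      dotProduct, mulVec, Finset.mul_sum, Finset.sum_mul]
    congr 1
    rw [Finset.sum_comm]
    apply Finset.sum_congr rfl; intros; apply Finset.sum_congr rfl; intros; ring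
  rw [det_fin_two, entry 0 0, entry 0 1, entry 1 0, entry 1 1]
  have h10 : (1 : Fin 2) ≠ 0 := by decide
  have h01 : (0 : Fin 2) ≠ 1 := by decide
  simp only [hC, Matrix.of_apply, if_pos rfl, if_neg h10, if_neg h01, if_true, eq_self_iff_true,
    zero_add]
  rw [show (v ⬝ᵥ M⁻¹ *ᵥ u) = u ⬝ᵥ M⁻¹ *ᵥ v from symm_form hM u v]

/-- the core exchange inequality -/
private lemma core {d : ℕ} {M : Matrix (Fin d) (Fin d) ℝ} (hM : M.PosDef)
    (u v : Fin d → ℝ) :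
    Real.log (M + vecMulVec v v + vecMulVec u u).det
      - Real.log (M + vecMulVec v v).det
    ≤ Real.log (M + vecMulVec u u).det - Real.log M.det := by
  have hMd : (0:ℝ) < M.det := hM.det_pos
  have hMu : (M + vecMulVec u u).PosDef := hM.add_posSemidef (psd_vmv u)
  have hMv : (M + vecMulVec v v).PosDef := hM.add_posSemidef (psd_vmv v)
  have hMvu : (M + vecMulVec v v + vecMulVec u u).PosDef :=
    hMv.add_posSemidef (psd_vmv u)
  have key : (M + vecMulVec v v + vecMulVec u u).det * M.det
      ≤ (M + vecMulVec u u).det * (M + vecMulVec v v).det := by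
    rw [det2 hM v u, det1 hM.det_pos.ne'.isUnit u u, det1 hM.det_pos.ne'.isUnit v v]
    have hb : (0:ℝ) ≤ (v ⬝ᵥ M⁻¹ *ᵥ u) * (v ⬝ᵥ M⁻¹ *ᵥ u) := mul_self_nonneg _
    nlinarith [mul_nonneg (mul_pos hMd hMd).le hb]
  have h1 : Real.log ((M + vecMulVec v v + vecMulVec u u).det * M.det)
      ≤ Real.log ((M + vecMulVec u u).det * (M + vecMulVec v v).det) :=
    Real.log_le_log (mul_pos hMvu.det_pos hMd) key
  rw [Real.log_mul hMvu.det_pos.ne' hMd.ne',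
    Real.log_mul hMu.det_pos.ne' hMv.det_pos.ne'] at h1
  linarith

/-- submodularity of F(S) = log det(ε I_d + Σ_{j∈S} k_j k_jᵀ). -/
theorem stmt9 {N d : ℕ} (ε : ℝ) (hε : 0 < ε) (k : Fin N → Fin d → ℝ)
    (F : Finset (Fin N) → ℝ)
    (hF : ∀ S, F S = Real.log (ε • (1 : Matrix (Fin d) (Fin d) ℝ) +
        ∑ j ∈ S, Matrix.vecMulVec (k j) (k j)).det)
    (A B : Finset (Fin N)) (hAB : A ⊆ B) (i : Fin N) (hi : i ∉ B) :
    F (insert i B) - F B ≤ F (insert i A) - F A := by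
  classical
  set M : Finset (Fin N) → Matrix (Fin d) (Fin d) ℝ :=
    fun S => ε • (1 : Matrix (Fin d) (Fin d) ℝ) + ∑ j ∈ S, vecMulVec (k j) (k j) with hMdef
  have hone : (ε • (1 : Matrix (Fin d) (Fin d) ℝ)).PosDef := by
    exact Matrix.PosDef.one.smul hε
  have hMpos : ∀ S, (M S).PosDef := by
    intro S
    refine hone.add_posSemidef ?_
    refine Finset.sum_induction _ _ (fun a b ha hb => ha.add hb) Matrix.PosSemidef.zero
      (fun j _ => psd_vmv (k j))
  have hins : ∀ (S : Finset (Fin N)) (j : Fin N), j ∉ S →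
      M (insert j S) = M S + vecMulVec (k j) (k j) := by
    intro S j hj
    simp only [hMdef, Finset.sum_insert hj]
    abel
  -- main claim by induction on T
  have claim : ∀ T : Finset (Fin N), i ∉ A ∪ T →
      F (insert i (A ∪ T)) - F (A ∪ T) ≤ F (insert i A) - F A := by
    intro T
    induction T using Finset.induction_on with
    | empty => intro _; simp
    | @insert j T' hj IH =>
      intro hiT
      by_cases hjS : j ∈ A ∪ T'
      · have : A ∪ insert j T' = A ∪ T' := by
          rw [Finset.union_insert, Finset.insert_eq_self.mpr hjS]
        rw [this] at hiT ⊢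
        exact IH hiT
      · have hUi : A ∪ insert j T' = insert j (A ∪ T') := Finset.union_insert _ _ _
        rw [hUi] at hiT ⊢
        have hiS : i ∉ A ∪ T' := fun h => hiT (Finset.mem_insert_of_mem h)
        have hij : i ≠ j := fun h => hiT (h ▸ Finset.mem_insert_self _ _)
        have hij' : i ∉ insert j (A ∪ T') := hiT
        have step : F (insert i (insert j (A ∪ T'))) - F (insert j (A ∪ T'))
            ≤ F (insert i (A ∪ T')) - F (A ∪ T') := by
          rw [hF, hF, hF, hF]
          have h1 : M (insert j (A ∪ T')) = M (A ∪ T') + vecMulVec (k j) (k j) :=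
            hins _ _ hjS
          have h2 : M (insert i (insert j (A ∪ T')))
              = M (A ∪ T') + vecMulVec (k j) (k j) + vecMulVec (k i) (k i) := by
            rw [hins _ _ hij', h1]
          have h3 : M (insert i (A ∪ T')) = M (A ∪ T') + vecMulVec (k i) (k i) :=
            hins _ _ hiS
          show Real.log (M (insert i (insert j (A ∪ T')))).det
              - Real.log (M (insert j (A ∪ T'))).det
            ≤ Real.log (M (insert i (A ∪ T'))).det - Real.log (M (A ∪ T')).det
          rw [h1, h2, h3]
          exact core (hMpos (A ∪ T')) (k i) (k j)
        exact step.trans (IH hiS)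
  have hB : B = A ∪ (B \ A) := (Finset.union_sdiff_of_subset hAB).symm
  rw [hB] at hi ⊢
  exact claim (B \ A) hi
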